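/- arXiv:1503.07510 — 6 statements merged into one kernel-verified Lean document; each statement's English description precedes it below -/
import Mathlib

section
/- Let S be a W×W real symmetric matrix with nonnegative off-diagonal entries and zero row sums, and suppose there is a spanning tree T on the vertex set {1,…,W} such that S_{ij} ≥ c > 0 for every edge {i,j} of T. Let S^{(1)} be the matrix obtained from S by deleting the first row and column. Then for every vector ρ = (ρ₂,…,ρ_W) ∈ ℝ^{W−1}, one has −ρᵀ S^{(1)} ρ ≥ (c / W²) ‖ρ‖₂². -/
open SimpleGraph in
lemma tele_aux {V : Type*} {G : SimpleGraph V} (x : V → ℝ) :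
    ∀ {u v : V} (w : G.Walk u v),
      (w.darts.map (fun d => x d.snd - x d.fst)).sum = x v - x u := by
  intro u v w
  induction w with
  | nil => simp
  | cons h p ih =>
      rw [SimpleGraph.Walk.darts_cons, List.map_cons, List.sum_cons, ih]; ring

theorem stmt1 (n : ℕ) (c : ℝ) (hc : 0 < c)
    (S : Matrix (Fin (n + 1)) (Fin (n + 1)) ℝ)
    (hsym : S.IsSymm)
    (hoff : ∀ i j, i ≠ j → 0 ≤ S i j)
    (hrow : ∀ i, ∑ j, S i j = 0)
    (G : SimpleGraph (Fin (n + 1)))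
    (htree : G.IsTree)
    (hedge : ∀ i j, G.Adj i j → c ≤ S i j) :
    ∀ ρ : Fin n → ℝ,
      c / ((n + 1 : ℝ)) ^ 2 * ∑ j, ρ j ^ 2 ≤
        -(dotProduct ρ
          ((S.submatrix (Fin.succAbove 0) (Fin.succAbove 0)).mulVec ρ)) := by
  classical
  intro ρ
  set x : Fin (n + 1) → ℝ := Fin.cons 0 ρ with hxdef
  have hx0 : x 0 = 0 := Fin.cons_zero _ _
  have hxs : ∀ i : Fin n, x i.succ = ρ i := fun i => by simp [hxdef]
  have hS : ∀ i j, S j i = S i j := fun i j => hsym.apply i j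
  -- rewriting the quadratic form via the full vector x
  have key : dotProduct ρ
      ((S.submatrix (Fin.succAbove 0) (Fin.succAbove 0)).mulVec ρ)
      = dotProduct x (S.mulVec x) := by
    simp only [dotProduct, Matrix.mulVec, Matrix.submatrix_apply,
      Fin.succAbove_zero]
    rw [Fin.sum_univ_succ]
    simp only [hx0, zero_mul, zero_add]
    refine Finset.sum_congr rfl fun i _ => ?_
    rw [hxs, Fin.sum_univ_succ, hx0, mul_zero, zero_add]
    simp only [hxs]
  -- the quadratic form as a sum of squares
  have hQ : -(dotProduct x (S.mulVec x))
      = (1/2) * ∑ i, ∑ j, S i j * (x i - x j)^2 := by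
    have expand : ∀ i j : Fin (n+1), S i j * (x i - x j)^2
        = S i j * (x i)^2 + S i j * (x j)^2 - 2 * (x i * (S i j * x j)) := by
      intro i j; ring
    have h1 : ∑ i : Fin (n+1), ∑ j, S i j * (x i)^2 = 0 := by
      refine Finset.sum_eq_zero fun i _ => ?_
      rw [← Finset.sum_mul, hrow, zero_mul]
    have h2 : ∑ i : Fin (n+1), ∑ j, S i j * (x j)^2 = 0 := by
      rw [Finset.sum_comm]
      refine Finset.sum_eq_zero fun j _ => ?_
      have : ∑ i, S i j = 0 := by
        rw [Finset.sum_congr rfl fun i _ => hS j i]; exact hrow j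
      rw [← Finset.sum_mul, this, zero_mul]
    have h3 : dotProduct x (S.mulVec x)
        = ∑ i : Fin (n+1), ∑ j, x i * (S i j * x j) := by
      simp only [dotProduct, Matrix.mulVec, Finset.mul_sum]
    calc -(dotProduct x (S.mulVec x))
        = (1/2) * (∑ i : Fin (n+1), ∑ j, (S i j * (x i)^2 + S i j * (x j)^2
            - 2 * (x i * (S i j * x j)))) := by
          rw [h3]
          simp only [Finset.sum_sub_distrib, Finset.sum_add_distrib, h1, h2,
            ← Finset.mul_sum]
          ring
      _ = (1/2) * ∑ i, ∑ j, S i j * (x i - x j)^2 := by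
          congr 1
          exact (Finset.sum_congr rfl fun i _ => Finset.sum_congr rfl fun j _ =>
            (expand i j).symm)
  set Q : ℝ := -(dotProduct x (S.mulVec x)) with hQdef
  have hterm : ∀ i j : Fin (n+1), 0 ≤ S i j * (x i - x j)^2 := by
    intro i j
    rcases eq_or_ne i j with h | h
    · simp [h]
    · exact mul_nonneg (hoff i j h) (sq_nonneg _)
  have hQ0 : 0 ≤ Q := by
    rw [hQ]
    have : (0:ℝ) ≤ ∑ i, ∑ j, S i j * (x i - x j)^2 :=
      Finset.sum_nonneg fun i _ => Finset.sum_nonneg fun j _ => hterm i j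
    linarith
  -- bound: sum over a set of distinct darts with distinct edges is at most Q
  have darts_bound : ∀ l : List G.Dart, l.Nodup → (l.map SimpleGraph.Dart.edge).Nodup →
      c * ∑ d ∈ l.toFinset, (x d.fst - x d.snd)^2 ≤ Q := by
    intro l hl hel
    set F : Fin (n+1) × Fin (n+1) → ℝ := fun p => S p.1 p.2 * (x p.1 - x p.2)^2 with hFdef
    have hF0 : ∀ p, 0 ≤ F p := fun p => hterm p.1 p.2
    set t1 : Finset (Fin (n+1) × Fin (n+1)) := l.toFinset.image (fun d => d.toProd) with ht1
    set t2 : Finset (Fin (n+1) × Fin (n+1)) := l.toFinset.image (fun d => d.toProd.swap) with ht2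
    have hdisj : Disjoint t1 t2 := by
      rw [Finset.disjoint_left]
      rintro p hp1 hp2
      simp only [ht1, ht2, Finset.mem_image, List.mem_toFinset] at hp1 hp2
      obtain ⟨d1, hd1, rfl⟩ := hp1
      obtain ⟨d2, hd2, hd2e⟩ := hp2
      have hsymm : d2.symm = d1 := by
        apply SimpleGraph.Dart.toProd_injective
        simpa using hd2e
      have hedgeeq : SimpleGraph.Dart.edge d1 = SimpleGraph.Dart.edge d2 := by
        rw [← hsymm, SimpleGraph.Dart.edge_symm]
      have : d1 = d2 := List.inj_on_of_nodup_map hel hd1 hd2 hedgeeq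
      exact SimpleGraph.Dart.symm_ne d2 (by rw [hsymm, this])
    have hsum1 : ∑ p ∈ t1, F p = ∑ d ∈ l.toFinset, F d.toProd :=
      Finset.sum_image fun a _ b _ h => SimpleGraph.Dart.toProd_injective h
    have hsum2 : ∑ p ∈ t2, F p = ∑ d ∈ l.toFinset, F d.toProd := by
      rw [Finset.sum_image fun a _ b _ h =>
        SimpleGraph.Dart.toProd_injective (Prod.swap_injective h)]
      refine Finset.sum_congr rfl fun d _ => ?_
      show S d.snd d.fst * (x d.snd - x d.fst)^2 = S d.fst d.snd * (x d.fst - x d.snd)^2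
      rw [hS]; ring
    have huniv : ∑ p : Fin (n+1) × Fin (n+1), F p
        = ∑ i, ∑ j, S i j * (x i - x j)^2 := Fintype.sum_prod_type F
    have hsub : ∑ p ∈ t1 ∪ t2, F p ≤ ∑ p : Fin (n+1) × Fin (n+1), F p :=
      Finset.sum_le_sum_of_subset_of_nonneg (Finset.subset_univ _)
        (fun p _ _ => hF0 p)
    rw [Finset.sum_union hdisj, hsum1, hsum2, huniv] at hsub
    have hlow : c * ∑ d ∈ l.toFinset, (x d.fst - x d.snd)^2
        ≤ ∑ d ∈ l.toFinset, F d.toProd := by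
      rw [Finset.mul_sum]
      exact Finset.sum_le_sum fun d _ =>
        mul_le_mul_of_nonneg_right (hedge _ _ d.adj) (sq_nonneg _)
    linarith [hQ]
  -- per-vertex bound via a path from 0 to j
  have hvert : ∀ j : Fin (n+1), c * x j ^ 2 ≤ (n : ℝ) * Q := by
    intro j
    obtain ⟨w⟩ := htree.isConnected.preconnected 0 j
    set p : G.Path 0 j := w.toPath with hp
    have hpath : p.1.IsPath := p.2
    have hedges : (p.1.darts.map SimpleGraph.Dart.edge).Nodup :=
      hpath.isTrail.edges_nodup
    have hdarts : p.1.darts.Nodup := hedges.of_map _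
    have tele : ∑ d ∈ p.1.darts.toFinset, (x d.snd - x d.fst) = x j := by
      rw [List.sum_toFinset _ hdarts, tele_aux x p.1, hx0, sub_zero]
    have hcard : (p.1.darts.toFinset.card : ℝ) ≤ (n : ℝ) := by
      have h1 : p.1.darts.toFinset.card = p.1.length := by
        rw [List.toFinset_card_of_nodup hdarts, SimpleGraph.Walk.length_darts]
      have h2 : p.1.length < Fintype.card (Fin (n+1)) := hpath.length_lt
      rw [Fintype.card_fin] at h2
      rw [h1]
      exact_mod_cast Nat.lt_succ_iff.mp h2
    have hcs : x j ^ 2 ≤ (p.1.darts.toFinset.card : ℝ)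
        * ∑ d ∈ p.1.darts.toFinset, (x d.snd - x d.fst)^2 := by
      rw [← tele]
      exact sq_sum_le_card_mul_sum_sq
    have heq : ∑ d ∈ p.1.darts.toFinset, (x d.snd - x d.fst)^2
        = ∑ d ∈ p.1.darts.toFinset, (x d.fst - x d.snd)^2 :=
      Finset.sum_congr rfl fun d _ => by ring
    have hdb := darts_bound p.1.darts hdarts hedges
    have hsums : 0 ≤ ∑ d ∈ p.1.darts.toFinset, (x d.fst - x d.snd)^2 :=
      Finset.sum_nonneg fun d _ => sq_nonneg _
    rw [heq] at hcs
    calc c * x j ^ 2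
        ≤ c * ((p.1.darts.toFinset.card : ℝ)
            * ∑ d ∈ p.1.darts.toFinset, (x d.fst - x d.snd)^2) :=
          mul_le_mul_of_nonneg_left hcs hc.le
      _ = (p.1.darts.toFinset.card : ℝ)
            * (c * ∑ d ∈ p.1.darts.toFinset, (x d.fst - x d.snd)^2) := by ring
      _ ≤ (n : ℝ) * Q := by
          apply mul_le_mul hcard hdb (by positivity) (by positivity)
  -- assemble
  have hsum : ∑ j, ρ j ^ 2 = ∑ j : Fin (n+1), x j ^ 2 := by
    rw [Fin.sum_univ_succ, hx0]
    simp [hxs]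
  have htotal : c * ∑ j : Fin (n+1), x j ^ 2 ≤ ((n : ℝ) + 1) * ((n : ℝ) * Q) := by
    rw [Finset.mul_sum]
    calc ∑ j : Fin (n+1), c * x j ^ 2 ≤ ∑ _j : Fin (n+1), (n : ℝ) * Q :=
          Finset.sum_le_sum fun j _ => hvert j
      _ = ((n : ℝ) + 1) * ((n : ℝ) * Q) := by
          rw [Finset.sum_const, Finset.card_univ, Fintype.card_fin, nsmul_eq_mul]
          push_cast; ring
  rw [key]
  show c / ((n : ℝ) + 1) ^ 2 * ∑ j, ρ j ^ 2 ≤ Q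
  rw [hsum, div_mul_eq_mul_div, div_le_iff₀ (by positivity)]
  nlinarith [htotal, hQ0, sq_nonneg ((n:ℝ))]
end

section
/- Let k ≥ 2 and let t₁, t₂, …, t_k be nonnegative reals with t₁ = 0 and t_k ≥ 1. Then ∑_{j=2}^{k} (t_j − t_{j−1})² / (1 + 2 t_{j−1}²) ≥ 1/(300 k²). -/
lemma aux_pow_bound (k : ℕ) (hk : 2 ≤ k) : (1 + 1/(5*(k:ℝ)))^k ≤ 5/4 := by
  have hk0 : (0:ℝ) < k := by
    have : 0 < k := by omega
    exact_mod_cast this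
  set a : ℝ := 1/(5*(k:ℝ)) with ha
  have ha0 : 0 < a := by positivity
  have hka : (k:ℝ) * a = 1/5 := by
    rw [ha]; field_simp
  have hk2 : (2:ℝ) ≤ k := by exact_mod_cast hk
  have ha1 : a ≤ 1/2 := by
    nlinarith [hka, hk2, ha0, hk0]
  have hlb : (4/5:ℝ) ≤ (1-a)^k := by
    have h := one_add_mul_le_pow (a := -a) (by linarith) k
    have : 1 + (k:ℝ) * (-a) = 4/5 := by rw [mul_neg, hka]; norm_num
    rw [this] at h
    rw [sub_eq_add_neg]; exact h
  have hmul : (1+a)^k * (1-a)^k ≤ 1 := by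
    rw [← mul_pow]
    have h01 : 0 ≤ (1+a)*(1-a) := by nlinarith
    have h1 : (1+a)*(1-a) ≤ 1 := by nlinarith
    exact pow_le_one₀ h01 h1
  have hnn : (0:ℝ) ≤ (1+a)^k := pow_nonneg (by linarith) k
  nlinarith [mul_le_mul_of_nonneg_left hlb hnn]

theorem stmt2 (k : ℕ) (hk : 2 ≤ k) (t : ℕ → ℝ)
    (ht : ∀ j, 0 ≤ t j) (h1 : t 1 = 0) (hk1 : 1 ≤ t k) :
    1 / (300 * (k : ℝ) ^ 2) ≤
      ∑ j ∈ Finset.Icc 2 k, (t j - t (j - 1)) ^ 2 / (1 + 2 * t (j - 1) ^ 2) := by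
  by_contra hcon
  push_neg at hcon
  have hk0 : (0:ℝ) < k := by
    have : 0 < k := by omega
    exact_mod_cast this
  set q : ℝ := 1 + 1/(5*(k:ℝ)) with hq
  have hq1 : (1:ℝ) ≤ q := by
    rw [hq]; have : 0 < 1/(5*(k:ℝ)) := by positivity
    linarith
  -- per-term bound
  have hstep : ∀ j ∈ Finset.Icc 2 k, t j ≤ t (j-1) * q + 1/(10*k) := by
    intro j hj
    have hnonneg : ∀ i ∈ Finset.Icc 2 k,
        0 ≤ (t i - t (i - 1)) ^ 2 / (1 + 2 * t (i - 1) ^ 2) := by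
      intro i _; positivity
    have hle := Finset.single_le_sum hnonneg hj
    have hterm : (t j - t (j-1)) ^ 2 / (1 + 2 * t (j-1) ^ 2) < 1 / (300 * (k:ℝ)^2) :=
      lt_of_le_of_lt hle hcon
    have hden : (0:ℝ) < 1 + 2 * t (j-1) ^ 2 := by positivity
    have hsq : (t j - t (j-1)) ^ 2 < (1 + 2 * t (j-1) ^ 2) / (300 * (k:ℝ)^2) := by
      rw [div_lt_div_iff₀ hden (by positivity)] at hterm
      rw [lt_div_iff₀ (by positivity)]
      linarith
    set b : ℝ := (1 + 2 * t (j-1)) / (10 * k) with hb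
    have hb0 : 0 ≤ b := by
      have := ht (j-1); positivity
    have hsq2 : (t j - t (j-1)) ^ 2 ≤ b ^ 2 := by
      have h2 : (1 + 2 * t (j-1) ^ 2) / (300 * (k:ℝ)^2) ≤ b ^ 2 := by
        rw [hb, div_pow, div_le_div_iff₀ (by positivity) (by positivity)]
        have := ht (j-1)
        nlinarith [sq_nonneg (t (j-1)), sq_nonneg ((k:ℝ)), mul_pos hk0 hk0,
          sq_nonneg ((k:ℝ) * t (j-1))]
      linarith
    have hdiff : t j - t (j-1) ≤ b := by
      nlinarith [sq_nonneg (t j - t (j-1) + b)]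
    have hbeq : t (j-1) + b = t (j-1) * q + 1/(10*k) := by
      rw [hb, hq]; field_simp; ring
    linarith
  -- induction
  have hind : ∀ j, 1 ≤ j → j ≤ k → t j ≤ (q^(j-1) - 1)/2 := by
    intro j hj
    induction j, hj using Nat.le_induction with
    | base => intro _; simp [h1]
    | succ n hn ih =>
      intro hnk
      have hn' := ih (by omega)
      have hs := hstep (n+1) (by simp only [Finset.mem_Icc]; omega)
      simp only [Nat.add_sub_cancel] at hs
      have hpow : q^n = q^(n-1) * q := by
        rw [← pow_succ]; congr 1; omega
      have hmul : t n * q ≤ ((q^(n-1) - 1)/2) * q :=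
        mul_le_mul_of_nonneg_right hn' (by linarith)
      have hqk : q - 1 = 1/(5*(k:ℝ)) := by rw [hq]; ring
      have h10 : (1:ℝ)/(10*k) = (q-1)/2 := by rw [hqk]; ring
      rw [Nat.add_sub_cancel]
      rw [hpow]
      calc t (n+1) ≤ t n * q + 1/(10*k) := hs
        _ ≤ ((q^(n-1) - 1)/2) * q + (q-1)/2 := by rw [← h10]; linarith
        _ = (q^(n-1) * q - 1)/2 := by ring
  have htk := hind k (by omega) le_rfl
  have hpk : q^(k-1) ≤ q^k := pow_le_pow_right₀ hq1 (by omega)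
  have hb : q^k ≤ 5/4 := aux_pow_bound k hk
  linarith
end

section
/- For all real t_j, t_k ≥ 0 and all real σ_j, σ_k, setting s_j = √(1 + t_j²) and s_k = √(1 + t_k²), one has |s_j t_k e^{iσ_k} − s_k t_j e^{iσ_j}|² ≥ (1/4)(t_k − t_j)² · ( 1/(1 + 2 t_j²) + 1/(1 + 2 t_k²) ). In particular, if moreover t_j, t_k ∈ [0,1], then |s_j t_k e^{iσ_k} − s_k t_j e^{iσ_j}|² ≥ (1/6)(t_k − t_j)². -/
set_option maxHeartbeats 1000000 in
theorem stmt3 (tj tk σj σk : ℝ) (htj : 0 ≤ tj) (htk : 0 ≤ tk) :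
    (1 / 4) * (tk - tj) ^ 2 * (1 / (1 + 2 * tj ^ 2) + 1 / (1 + 2 * tk ^ 2)) ≤
      ‖(((Real.sqrt (1 + tj ^ 2) * tk : ℝ) : ℂ) * Complex.exp ((σk : ℂ) * Complex.I)
        - ((Real.sqrt (1 + tk ^ 2) * tj : ℝ) : ℂ) * Complex.exp ((σj : ℂ) * Complex.I))‖ ^ 2
    ∧ (tj ≤ 1 → tk ≤ 1 →
      (1 / 6) * (tk - tj) ^ 2 ≤
        ‖(((Real.sqrt (1 + tj ^ 2) * tk : ℝ) : ℂ) * Complex.exp ((σk : ℂ) * Complex.I)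
          - ((Real.sqrt (1 + tk ^ 2) * tj : ℝ) : ℂ) * Complex.exp ((σj : ℂ) * Complex.I))‖ ^ 2) := by
  set A := Real.sqrt (1 + tj ^ 2) * tk with hAdef
  set B := Real.sqrt (1 + tk ^ 2) * tj with hBdef
  have hA : 0 ≤ A := mul_nonneg (Real.sqrt_nonneg _) htk
  have hB : 0 ≤ B := mul_nonneg (Real.sqrt_nonneg _) htj
  have hA2 : A ^ 2 = (1 + tj ^ 2) * tk ^ 2 := by
    rw [hAdef, mul_pow, Real.sq_sqrt (by positivity)]
  have hB2 : B ^ 2 = (1 + tk ^ 2) * tj ^ 2 := by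
    rw [hBdef, mul_pow, Real.sq_sqrt (by positivity)]
  have habs : |A - B| ≤ ‖(((A : ℝ) : ℂ) * Complex.exp ((σk : ℂ) * Complex.I)
      - ((B : ℝ) : ℂ) * Complex.exp ((σj : ℂ) * Complex.I))‖ := by
    have h1 : ‖(((A : ℝ) : ℂ) * Complex.exp ((σk : ℂ) * Complex.I))‖ = A := by
      rw [norm_mul, Complex.norm_exp_ofReal_mul_I, mul_one, Complex.norm_real, Real.norm_eq_abs, abs_of_nonneg hA]
    have h2 : ‖(((B : ℝ) : ℂ) * Complex.exp ((σj : ℂ) * Complex.I))‖ = B := by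
      rw [norm_mul, Complex.norm_exp_ofReal_mul_I, mul_one, Complex.norm_real, Real.norm_eq_abs, abs_of_nonneg hB]
    calc |A - B|
        = |‖(((A : ℝ) : ℂ) * Complex.exp ((σk : ℂ) * Complex.I))‖ -
            ‖(((B : ℝ) : ℂ) * Complex.exp ((σj : ℂ) * Complex.I))‖| := by rw [h1, h2]
      _ ≤ _ := abs_norm_sub_norm_le _ _
  have hsq : (A - B) ^ 2 ≤ ‖(((A : ℝ) : ℂ) * Complex.exp ((σk : ℂ) * Complex.I)
      - ((B : ℝ) : ℂ) * Complex.exp ((σj : ℂ) * Complex.I))‖ ^ 2 := by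
    calc (A - B) ^ 2 = |A - B| ^ 2 := (sq_abs _).symm
      _ ≤ _ := by
          have := pow_le_pow_left₀ (abs_nonneg (A - B)) habs 2
          simpa using this
  have hd1 : (0:ℝ) < 1 + 2 * tj ^ 2 := by positivity
  have hd2 : (0:ℝ) < 1 + 2 * tk ^ 2 := by positivity
  have key : (1 / 4) * (tk - tj) ^ 2 * (1 / (1 + 2 * tj ^ 2) + 1 / (1 + 2 * tk ^ 2))
      ≤ (A - B) ^ 2 := by
    have hS : A ^ 2 + B ^ 2 = tj ^ 2 + tk ^ 2 + 2 * tj ^ 2 * tk ^ 2 := by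
      rw [hA2, hB2]; ring
    have hdiff : (A - B) ^ 2 * (A + B) ^ 2 = (tk ^ 2 - tj ^ 2) ^ 2 := by
      have h : (A - B) ^ 2 * (A + B) ^ 2 = (A ^ 2 - B ^ 2) ^ 2 := by ring
      rw [h, hA2, hB2]; ring
    have hplus : (A + B) ^ 2 ≤ 2 * (tj ^ 2 + tk ^ 2 + 2 * tj ^ 2 * tk ^ 2) := by
      nlinarith [sq_nonneg (A - B)]
    have h5 : (tk ^ 2 - tj ^ 2) ^ 2 ≤
        (A - B) ^ 2 * (2 * (tj ^ 2 + tk ^ 2 + 2 * tj ^ 2 * tk ^ 2)) := by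
      calc (tk ^ 2 - tj ^ 2) ^ 2 = (A - B) ^ 2 * (A + B) ^ 2 := hdiff.symm
        _ ≤ _ := mul_le_mul_of_nonneg_left hplus (sq_nonneg _)
    rcases eq_or_lt_of_le (by positivity : (0:ℝ) ≤ tj ^ 2 + tk ^ 2 + 2 * tj ^ 2 * tk ^ 2)
      with hS0 | hS0
    · have htj0 : tj = 0 := by nlinarith [sq_nonneg tj, sq_nonneg tk]
      have htk0 : tk = 0 := by nlinarith [sq_nonneg tj, sq_nonneg tk]
      simp [htj0, htk0]
      positivity
    · have hLHS : (1 / 4) * (tk - tj) ^ 2 * (1 / (1 + 2 * tj ^ 2) + 1 / (1 + 2 * tk ^ 2))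
          = ((tk - tj) ^ 2 * ((1 + 2 * tj ^ 2) + (1 + 2 * tk ^ 2))) /
            (4 * (1 + 2 * tj ^ 2) * (1 + 2 * tk ^ 2)) := by
        field_simp
        ring
      rw [hLHS, div_le_iff₀ (by positivity)]
      have q : ((1 + 2 * tj ^ 2) + (1 + 2 * tk ^ 2)) *
          (2 * (tj ^ 2 + tk ^ 2 + 2 * tj ^ 2 * tk ^ 2)) ≤
          (tk + tj) ^ 2 * (4 * (1 + 2 * tj ^ 2) * (1 + 2 * tk ^ 2)) := by
        linarith [mul_nonneg htj htk, pow_nonneg htj 4, pow_nonneg htk 4,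
          mul_nonneg (pow_nonneg htj 4) (sq_nonneg tk),
          mul_nonneg (sq_nonneg tj) (pow_nonneg htk 4),
          mul_nonneg (pow_nonneg htj 3) htk,
          mul_nonneg htj (pow_nonneg htk 3),
          mul_nonneg (pow_nonneg htj 3) (pow_nonneg htk 3)]
      have hpoly : (tk - tj) ^ 2 * ((1 + 2 * tj ^ 2) + (1 + 2 * tk ^ 2)) *
          (2 * (tj ^ 2 + tk ^ 2 + 2 * tj ^ 2 * tk ^ 2)) ≤
          (tk ^ 2 - tj ^ 2) ^ 2 * (4 * (1 + 2 * tj ^ 2) * (1 + 2 * tk ^ 2)) := by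
        calc (tk - tj) ^ 2 * ((1 + 2 * tj ^ 2) + (1 + 2 * tk ^ 2)) *
            (2 * (tj ^ 2 + tk ^ 2 + 2 * tj ^ 2 * tk ^ 2))
            = (tk - tj) ^ 2 * (((1 + 2 * tj ^ 2) + (1 + 2 * tk ^ 2)) *
              (2 * (tj ^ 2 + tk ^ 2 + 2 * tj ^ 2 * tk ^ 2))) := by ring
          _ ≤ (tk - tj) ^ 2 * ((tk + tj) ^ 2 * (4 * (1 + 2 * tj ^ 2) * (1 + 2 * tk ^ 2))) :=
              mul_le_mul_of_nonneg_left q (sq_nonneg _)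
          _ = (tk ^ 2 - tj ^ 2) ^ 2 * (4 * (1 + 2 * tj ^ 2) * (1 + 2 * tk ^ 2)) := by ring
      have h6 : (tk ^ 2 - tj ^ 2) ^ 2 * (4 * (1 + 2 * tj ^ 2) * (1 + 2 * tk ^ 2)) ≤
          (A - B) ^ 2 * (2 * (tj ^ 2 + tk ^ 2 + 2 * tj ^ 2 * tk ^ 2)) *
            (4 * (1 + 2 * tj ^ 2) * (1 + 2 * tk ^ 2)) :=
        mul_le_mul_of_nonneg_right h5 (by positivity)
      have h7 := hpoly.trans h6
      have h8 : 0 < 2 * (tj ^ 2 + tk ^ 2 + 2 * tj ^ 2 * tk ^ 2) := by linarith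
      have h9 : ((tk - tj) ^ 2 * ((1 + 2 * tj ^ 2) + (1 + 2 * tk ^ 2))) *
          (2 * (tj ^ 2 + tk ^ 2 + 2 * tj ^ 2 * tk ^ 2)) ≤
          ((A - B) ^ 2 * (4 * (1 + 2 * tj ^ 2) * (1 + 2 * tk ^ 2))) *
          (2 * (tj ^ 2 + tk ^ 2 + 2 * tj ^ 2 * tk ^ 2)) := by linarith [h7]
      exact le_of_mul_le_mul_right h9 h8
  constructor
  · exact key.trans hsq
  · intro h1 h2
    refine le_trans ?_ (key.trans hsq)
    have e1 : (1:ℝ) / 3 ≤ 1 / (1 + 2 * tj ^ 2) := by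
      rw [div_le_div_iff₀ (by norm_num) hd1]
      nlinarith
    have e2 : (1:ℝ) / 3 ≤ 1 / (1 + 2 * tk ^ 2) := by
      rw [div_le_div_iff₀ (by norm_num) hd2]
      nlinarith
    nlinarith [sq_nonneg (tk - tj)]
end

section
/- For all real t, t_j ≥ 0, setting s = √(1+t²) and s_j = √(1+t_j²), one has (s_j² + t_j²)(s² + t²) − 4 s t s_j t_j ≥ (1 + 2t²) / (2(1 + 2 t_j²)). -/
set_option maxHeartbeats 1000000


theorem stmt4 (t tj : ℝ) (ht : 0 ≤ t) (htj : 0 ≤ tj) :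
    (1 + 2 * t ^ 2) / (2 * (1 + 2 * tj ^ 2)) ≤
      (Real.sqrt (1 + tj ^ 2) ^ 2 + tj ^ 2) * (Real.sqrt (1 + t ^ 2) ^ 2 + t ^ 2)
        - 4 * Real.sqrt (1 + t ^ 2) * t * Real.sqrt (1 + tj ^ 2) * tj := by
  set s := Real.sqrt (1 + t ^ 2) with hs
  set sj := Real.sqrt (1 + tj ^ 2) with hsj
  have hs2 : s ^ 2 = 1 + t ^ 2 := Real.sq_sqrt (by positivity)
  have hsj2 : sj ^ 2 = 1 + tj ^ 2 := Real.sq_sqrt (by positivity)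
  have hsnn : 0 ≤ s := Real.sqrt_nonneg _
  have hsjnn : 0 ≤ sj := Real.sqrt_nonneg _
  set B := 4 * s * t * sj * tj with hBdef
  have hBnn : 0 ≤ B := by positivity
  set a := 1 + 2 * t ^ 2 with ha
  set b := 1 + 2 * tj ^ 2 with hb
  have ha1 : 1 ≤ a := by nlinarith
  have hb1 : 1 ≤ b := by nlinarith
  have hB2 : B ^ 2 = (a ^ 2 - 1) * (b ^ 2 - 1) := by
    have : B ^ 2 = 16 * s ^ 2 * t ^ 2 * sj ^ 2 * tj ^ 2 := by ring
    rw [this, hs2, hsj2]; ring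
  have hab : (0:ℝ) < a * b := by nlinarith
  have hApB : B ≤ a * b := by nlinarith [sq_nonneg (a - b), hB2, hBnn, hab]
  have hAB : 0 ≤ a * b - B := by linarith
  have hapos : (0:ℝ) < a := by nlinarith
  have h1 : (a*b)^2 - B^2 = a^2 + b^2 - 1 := by rw [hB2]; ring
  have h2 : a^2 ≤ (a*b - B) * (2*(a*b)) := by nlinarith [h1, sq_nonneg (a*b - B), hb1]
  have hgoal : a ≤ (b * a - B) * (2 * b) := by nlinarith [h2, hapos]
  rw [div_le_iff₀ (by nlinarith), hsj2, hs2]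
  calc a ≤ (b * a - B) * (2 * b) := hgoal
    _ = ((1 + tj ^ 2 + tj ^ 2) * (1 + t ^ 2 + t ^ 2) - B) * (2 * (1 + 2 * tj ^ 2)) := by
        rw [ha, hb]; ring
end

section
/- Let A be an n×n complex matrix all of whose singular values are ≥ 1. Then for any index sets I, J ⊆ {1,…,n} with |I| = |J| = m < n, the submatrix A^{(I|J)} obtained by deleting the rows indexed by I and the columns indexed by J satisfies |det A^{(I|J)}| ≤ |det A|. -/
open scoped ComplexOrder

namespace Stmt8Aux

open Matrix

variable {m l : Type*} [Fintype m] [DecidableEq m] [Fintype l] [DecidableEq l]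

lemma one_le_det {N : Matrix m m ℂ} (h : (N - 1).PosSemidef) : (1 : ℂ) ≤ N.det := by
  have hN : N.IsHermitian := by
    simpa using h.1.add (isHermitian_one (n := m) (α := ℂ))
  rw [hN.det_eq_prod_eigenvalues]
  have h1 : ∀ i, (1 : ℝ) ≤ hN.eigenvalues i := by
    intro i
    have h3 : star ⇑(hN.eigenvectorBasis i) ⬝ᵥ ⇑(hN.eigenvectorBasis i) = (1 : ℂ) := by
      have hnorm := hN.eigenvectorBasis.orthonormal.1 i
      rw [dotProduct_comm, ← EuclideanSpace.inner_eq_star_dotProduct]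
      simp [inner_self_eq_norm_sq_to_K, hnorm]
    have hev := hN.mulVec_eigenvectorBasis i
    have h2 := h.re_dotProduct_nonneg ⇑(hN.eigenvectorBasis i)
    rw [sub_mulVec, one_mulVec, dotProduct_sub, hev, dotProduct_smul, h3] at h2
    simp only [smul_eq_mul, mul_one, map_sub, Complex.one_re, Complex.real_smul,
      Complex.ofReal_re, Complex.mul_re, Complex.one_im] at h2
    simpa using h2
  have hp : (1 : ℝ) ≤ ∏ i, hN.eigenvalues i := by
    have := Finset.prod_le_prod (s := Finset.univ) (f := fun _ : m => (1 : ℝ))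
      (g := hN.eigenvalues) (fun i _ => zero_le_one) (fun i _ => h1 i)
    simpa using this
  calc (1 : ℂ) = ((1 : ℝ) : ℂ) := by norm_num
    _ ≤ ((∏ i, hN.eigenvalues i : ℝ) : ℂ) := Complex.real_le_real.mpr hp
    _ = ∏ i, (hN.eigenvalues i : ℂ) := by push_cast; rfl

lemma det_nonneg' {S : Matrix m m ℂ} (h : S.PosSemidef) : (0 : ℂ) ≤ S.det := by
  rw [h.1.det_eq_prod_eigenvalues]
  exact Finset.prod_nonneg fun i _ => Complex.zero_le_real.2 (h.eigenvalues_nonneg i)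

lemma det_le_det_add (B : Matrix m m ℂ) {Y : Matrix m m ℂ} (hY : Y.PosSemidef) :
    (Bᴴ * B).det ≤ (Bᴴ * B + Y).det := by
  by_cases hdet : IsUnit B.det
  · haveI := B.invertibleOfIsUnitDet hdet
    have hdetH : IsUnit Bᴴ.det := by
      rw [det_conjTranspose]; exact hdet.star
    have key : Bᴴ * B + Y = Bᴴ * (1 + (B⁻¹)ᴴ * Y * B⁻¹) * B := by
      rw [Matrix.mul_add, Matrix.add_mul, Matrix.mul_one]
      congr 1
      rw [conjTranspose_nonsing_inv]
      have : Bᴴ * (Bᴴ⁻¹ * Y * B⁻¹) * B = (Bᴴ * Bᴴ⁻¹) * Y * (B⁻¹ * B) := by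
        simp only [Matrix.mul_assoc]
      rw [this, Matrix.mul_nonsing_inv _ hdetH, Matrix.nonsing_inv_mul _ hdet,
        Matrix.one_mul, Matrix.mul_one]
    have h1 : (1 : ℂ) ≤ (1 + (B⁻¹)ᴴ * Y * B⁻¹).det := by
      apply one_le_det
      simpa using hY.conjTranspose_mul_mul_same (B⁻¹)
    have h0 : (0 : ℂ) ≤ Bᴴ.det * B.det := by
      have := det_nonneg' (posSemidef_conjTranspose_mul_self B)
      rwa [det_mul] at this
    rw [key, det_mul, det_mul, det_mul]
    calc Bᴴ.det * B.det = (Bᴴ.det * B.det) * 1 := by ring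
      _ ≤ (Bᴴ.det * B.det) * (1 + (B⁻¹)ᴴ * Y * B⁻¹).det := mul_le_mul_of_nonneg_left h1 h0
      _ = Bᴴ.det * (1 + (B⁻¹)ᴴ * Y * B⁻¹).det * B.det := by ring
  · rw [isUnit_iff_ne_zero, not_ne_iff] at hdet
    have h0 : (Bᴴ * B).det = 0 := by rw [det_mul, hdet, mul_zero]
    rw [h0]
    exact det_nonneg' ((posSemidef_conjTranspose_mul_self B).add hY)



lemma core (A : Matrix (m ⊕ l) (m ⊕ l) ℂ) (hA : (Aᴴ * A - 1).PosSemidef) :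
    ‖(A.submatrix Sum.inl Sum.inl).det‖ ≤ ‖A.det‖ := by
  set M := Aᴴ * A with hM
  have hMpsd : M.PosSemidef := posSemidef_conjTranspose_mul_self A
  have hMh : M.IsHermitian := hMpsd.1
  set P := M.toBlocks₁₁ with hPdef
  set X := M.toBlocks₁₂ with hXdef
  set Q := M.toBlocks₂₂ with hQdef
  have h21 : M.toBlocks₂₁ = Xᴴ := by
    ext i j
    simp only [toBlocks₂₁, hXdef, toBlocks₁₂, conjTranspose_apply, of_apply]
    rw [← conjTranspose_apply, hMh.eq]
  have hblocks : M = fromBlocks P X Xᴴ Q := by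
    rw [← h21, hPdef, hXdef, hQdef]
    exact (fromBlocks_toBlocks M).symm
  have hP1 : (P - 1).PosSemidef := by
    have h := hA.submatrix Sum.inl
    have he : (M - 1).submatrix Sum.inl Sum.inl = P - 1 := by
      ext i j
      simp [hPdef, toBlocks₁₁, one_apply]
    rwa [he] at h
  have hPD : P.PosDef := by
    have h4 : P = (P - 1) + 1 := by abel
    rw [h4]
    exact Matrix.PosDef.posSemidef_add hP1 (Matrix.PosDef.one (n := m) (R := ℂ))
  haveI : Invertible P := P.invertibleOfIsUnitDet hPD.det_pos.ne'.isUnit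
  have hproj : (fromBlocks (1 : Matrix m m ℂ) 0 0 (0 : Matrix l l ℂ)).PosSemidef := by
    have heq : fromBlocks (1 : Matrix m m ℂ) 0 0 (0 : Matrix l l ℂ)
        = diagonal (Sum.elim (fun _ => (1 : ℂ)) (fun _ => (0 : ℂ))) := by
      rw [← fromBlocks_diagonal]
      congr 1 <;> simp [diagonal_one]
    rw [heq]
    exact PosSemidef.diagonal (fun i => by cases i <;> simp)
  have hN' : (fromBlocks P X Xᴴ (Q - 1)).PosSemidef := by
    have heq : fromBlocks P X Xᴴ (Q - 1) = (M - 1) + fromBlocks 1 0 0 0 := by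
      rw [hblocks, ← fromBlocks_one (l := m) (m := l)]
      ext i j
      cases i <;> cases j <;> simp [fromBlocks]
    rw [heq]
    exact hA.add hproj
  have hS := (PosDef.fromBlocks₁₁ X (Q - 1) hPD).mp hN'
  have hone : (1 : ℂ) ≤ (Q - Xᴴ * P⁻¹ * X).det := by
    apply one_le_det
    have he : Q - Xᴴ * P⁻¹ * X - 1 = Q - 1 - Xᴴ * P⁻¹ * X := sub_right_comm _ _ _
    rwa [he]
  have hdetM : M.det = P.det * (Q - Xᴴ * P⁻¹ * X).det := by
    rw [hblocks, det_fromBlocks₁₁, invOf_eq_nonsing_inv]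
  set B := A.submatrix Sum.inl Sum.inl with hBdef
  set D := A.submatrix Sum.inr Sum.inl with hDdef
  have hPsplit : P = Bᴴ * B + Dᴴ * D := by
    ext i j
    simp only [hPdef, toBlocks₁₁, of_apply, Matrix.add_apply, mul_apply, conjTranspose_apply,
      submatrix_apply, hM, Fintype.sum_sum_type, hBdef, hDdef]
  have hstep1 : (Bᴴ * B).det ≤ P.det := by
    rw [hPsplit]
    exact det_le_det_add B (posSemidef_conjTranspose_mul_self D)
  have hstep2 : P.det ≤ M.det := by
    rw [hdetM]
    calc P.det = P.det * 1 := (mul_one _).symm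
      _ ≤ P.det * (Q - Xᴴ * P⁻¹ * X).det :=
          mul_le_mul_of_nonneg_left hone (le_of_lt hPD.det_pos)
  have hfin : (Bᴴ * B).det ≤ M.det := le_trans hstep1 hstep2
  have hBB : (Bᴴ * B).det = ((‖B.det‖ ^ 2 : ℝ) : ℂ) := by
    rw [det_mul, det_conjTranspose, Complex.star_def, mul_comm, Complex.mul_conj]
    rw [Complex.normSq_eq_norm_sq]
  have hMM : M.det = ((‖A.det‖ ^ 2 : ℝ) : ℂ) := by
    rw [hM, det_mul, det_conjTranspose, Complex.star_def, mul_comm, Complex.mul_conj]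
    rw [Complex.normSq_eq_norm_sq]
  rw [hBB, hMM] at hfin
  have h5 := Complex.real_le_real.mp hfin
  nlinarith [norm_nonneg B.det, norm_nonneg A.det]

end Stmt8Aux

open Matrix Stmt8Aux in
open ComplexOrder in
theorem stmt8 (n : ℕ) (A : Matrix (Fin n) (Fin n) ℂ)
    (hA : (A.conjTranspose * A - 1).PosSemidef)
    (k : ℕ) (hk : 1 ≤ k) (hkn : k ≤ n)
    (r c : Fin k → Fin n) (hr : Function.Injective r) (hc : Function.Injective c) :
    ‖(A.submatrix r c).det‖ ≤ ‖A.det‖ := by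
  classical
  have mk : ∀ (g : Fin k → Fin n), Function.Injective g →
      {e : (Fin k ⊕ Fin (n - k)) ≃ Fin n // ∀ i, e (Sum.inl i) = g i} := by
    intro g hg
    have h1 : Fintype.card ↥(Set.range g) = k := by
      rw [Set.card_range_of_injective hg, Fintype.card_fin]
    have h2 : Fintype.card ↥(Set.range g)ᶜ = n - k := by
      rw [Fintype.card_compl_set, h1, Fintype.card_fin]
    refine ⟨(Equiv.sumCongr (Equiv.ofInjective g hg)
      (Fintype.equivOfCardEq (by rw [Fintype.card_fin, h2]))).trans
      (Equiv.Set.sumCompl (Set.range g)), fun i => ?_⟩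
    simp
  obtain ⟨e, he⟩ := mk r hr
  obtain ⟨f, hf⟩ := mk c hc
  set A' := A.submatrix e f with hA'def
  have hsub : A'.submatrix Sum.inl Sum.inl = A.submatrix r c := by
    ext i j
    simp [hA'def, he, hf]
  have h1 : A'ᴴ * A' = (Aᴴ * A).submatrix f f := by
    rw [hA'def, conjTranspose_submatrix]
    exact submatrix_mul_equiv Aᴴ A f e f
  have h2 : A'ᴴ * A' - 1 = (Aᴴ * A - 1).submatrix f f := by
    rw [h1]
    ext i j
    simp [one_apply, f.injective.eq_iff]
  have hA' : (A'ᴴ * A' - 1).PosSemidef := by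
    rw [h2]
    exact (posSemidef_submatrix_equiv f).mpr hA
  have hcore := core A' hA'
  rw [hsub] at hcore
  have habs : ‖A'.det‖ = ‖A.det‖ := by
    have h3 : A' = (A.submatrix e e).submatrix id (f.trans e.symm) := by
      ext i j
      simp [hA'def]
    rw [h3, det_permute', norm_mul, det_submatrix_equiv_self]
    have h4 : ‖((Equiv.Perm.sign (f.trans e.symm) : ℤ) : ℂ)‖ = 1 := by
      rcases Int.units_eq_one_or (Equiv.Perm.sign (f.trans e.symm)) with h | h <;> simp [h]
    rw [h4, one_mul]
  rw [← habs]
  exact hcore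
end

section
/- Let W ≥ 1, let S be a W×W real symmetric matrix with nonnegative off-diagonal entries and zero row sums satisfying xᵀ(I+S)x ≥ c₀‖x‖² for all x ∈ ℝ^W (some c₀ > 0), and let E ∈ ℝ with E² ≤ 2. Set a₊ = (iE + √(4−E²))/2 and 𝔨(a) = a²/2 − iEa − Log a. Define, for r = (r₁,…,r_W) ∈ (0,∞)^W and b_j = r_j a₊, the function ℓ(b) = −(1/4)∑_{j,k} S_{jk}(b_j − b_k)² + ∑_j 𝔨(b_j). Then Re( ℓ(b) − W·𝔨(a₊) ) ≥ (c₀(2−E²)/4) ∑_{j=1}^W (r_j − 1)² + ∑_{j=1}^W (r_j − log r_j − 1). In particular Re(ℓ(b) − W𝔨(a₊)) ≥ 0, with equality iff all r_j = 1. -/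
noncomputable def apE (E : ℝ) : ℂ := (Complex.I * (E : ℂ) + (Real.sqrt (4 - E ^ 2) : ℂ)) / 2

lemma aux_abs (E : ℝ) (hE : E^2 ≤ 2) : ‖apE E‖ = 1 := by
  have h4 : (0:ℝ) ≤ 4 - E^2 := by nlinarith
  have hs2 : Real.sqrt (4 - E^2) ^ 2 = 4 - E^2 := Real.sq_sqrt h4
  have hn : Complex.normSq (apE E) = 1 := by
    simp [apE, Complex.normSq_apply, Complex.div_re, Complex.div_im]
    nlinarith [hs2]
  have h := Complex.sq_norm (apE E)
  rw [hn] at h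
  nlinarith [norm_nonneg (apE E)]

lemma aux_kre (E t : ℝ) (hE : E^2 ≤ 2) (ht : 0 < t) :
    (((t:ℂ) * apE E) ^ 2 / 2 - Complex.I * (E : ℂ) * ((t:ℂ) * apE E)
      - Complex.log ((t:ℂ) * apE E)).re
    = (2 - E^2)/4 * t^2 + E^2/2 * t - Real.log t := by
  have h4 : (0:ℝ) ≤ 4 - E^2 := by nlinarith
  have hs2 : Real.sqrt (4 - E^2) ^ 2 = 4 - E^2 := Real.sq_sqrt h4
  have hlog : (Complex.log ((t:ℂ) * apE E)).re = Real.log t := by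
    rw [Complex.log_re, norm_mul, Complex.norm_real, Real.norm_eq_abs, aux_abs E hE, abs_of_pos ht, mul_one]
  simp only [Complex.sub_re, hlog]
  have hs2' : Real.sqrt (4 - E*E) * Real.sqrt (4 - E*E) = 4 - E*E := by
    rw [show 4 - E*E = 4 - E^2 by ring, ← pow_two]; exact hs2
  simp [apE, Complex.div_re, Complex.div_im, Complex.mul_re, Complex.mul_im,
    Complex.normSq_apply, pow_two]
  nlinarith [hs2']

lemma aux_sqre (E c : ℝ) (hE : E^2 ≤ 2) :
    (((c:ℂ) * apE E) ^ 2).re = c^2 * ((2 - E^2)/2) := by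
  have h4 : (0:ℝ) ≤ 4 - E^2 := by nlinarith
  have hs2 : Real.sqrt (4 - E^2) ^ 2 = 4 - E^2 := Real.sq_sqrt h4
  have hs2' : Real.sqrt (4 - E*E) * Real.sqrt (4 - E*E) = 4 - E*E := by
    rw [show 4 - E*E = 4 - E^2 by ring, ← pow_two]; exact hs2
  simp [apE, Complex.div_re, Complex.div_im, Complex.mul_re, Complex.mul_im,
    Complex.normSq_apply, pow_two]
  nlinarith [hs2']

theorem stmt19 (W : ℕ) (hW : 1 ≤ W) (c₀ : ℝ) (hc₀ : 0 < c₀)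
    (S : Matrix (Fin W) (Fin W) ℝ) (hsym : S.IsSymm)
    (hoff : ∀ i j, i ≠ j → 0 ≤ S i j)
    (hrow : ∀ i, ∑ j, S i j = 0)
    (hspec : ∀ x : Fin W → ℝ, c₀ * ∑ i, x i ^ 2 ≤ dotProduct x ((1 + S).mulVec x))
    (E : ℝ) (hE : E ^ 2 ≤ 2)
    (r : Fin W → ℝ) (hr : ∀ j, 0 < r j) :
    let a : ℂ := (Complex.I * (E : ℂ) + (Real.sqrt (4 - E ^ 2) : ℂ)) / 2
    let k : ℂ → ℂ := fun z => z ^ 2 / 2 - Complex.I * (E : ℂ) * z - Complex.log z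
    let b : Fin W → ℂ := fun j => (r j : ℂ) * a
    let L : ℂ := -(1 / 4) * ∑ j, ∑ l, (S j l : ℂ) * (b j - b l) ^ 2 + ∑ j, k (b j)
    (c₀ * (2 - E ^ 2) / 4 * ∑ j, (r j - 1) ^ 2 + ∑ j, (r j - Real.log (r j) - 1)
        ≤ (L - (W : ℂ) * k a).re)
    ∧ 0 ≤ (L - (W : ℂ) * k a).re
    ∧ ((L - (W : ℂ) * k a).re = 0 ↔ ∀ j, r j = 1) := by
  intro a k b L
  have h2E : (0:ℝ) ≤ 2 - E^2 := by linarith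
  set x : Fin W → ℝ := fun j => r j - 1 with hxdef
  have hxj : ∀ j, x j = r j - 1 := fun _ => rfl
  have hbd : ∀ j, b j = (r j : ℂ) * apE E := fun _ => rfl
  have hkb : ∀ j, (k (b j)).re
      = (2-E^2)/4 * (r j)^2 + E^2/2 * (r j) - Real.log (r j) := by
    intro j
    exact aux_kre E (r j) hE (hr j)
  have hka : (k a).re = (2-E^2)/4 + E^2/2 := by
    have h := aux_kre E 1 hE one_pos
    simp only [Complex.ofReal_one, one_mul, one_pow, mul_one, Real.log_one, sub_zero] at h
    rw [show k a = (apE E)^2/2 - Complex.I*(E:ℂ)*apE E - Complex.log (apE E) from rfl]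
    linarith [h]
  have hqt : ∀ j l, ((S j l : ℂ) * (b j - b l)^2).re
      = S j l * ((r j - r l)^2 * ((2-E^2)/2)) := by
    intro j l
    have hdiff : b j - b l = ((r j - r l : ℝ) : ℂ) * apE E := by
      rw [hbd, hbd]; push_cast; ring
    rw [hdiff, Complex.mul_re]
    simp only [Complex.ofReal_re, Complex.ofReal_im, zero_mul, sub_zero]
    rw [aux_sqre E (r j - r l) hE]
  -- re decomposition
  have h2 : ((W:ℂ) * k a).re = W * (k a).re := by
    simp [Complex.mul_re]
  have h3 : L.re = -(1/4) * (∑ j, ∑ l, ((S j l:ℂ) * (b j - b l)^2).re)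
      + ∑ j, (k (b j)).re := by
    have hc : ∀ X : ℂ, ((-(1/4):ℂ) * X).re = -(1/4) * X.re := by
      intro X; rw [Complex.mul_re]; norm_num
    rw [show L = -(1 / 4) * ∑ j, ∑ l, (S j l : ℂ) * (b j - b l) ^ 2 + ∑ j, k (b j) from rfl,
      Complex.add_re, hc]
    simp only [Complex.re_sum]
  have hre : (L - (W:ℂ) * k a).re
      = -(1/4) * (∑ j, ∑ l, S j l * ((r j - r l)^2 * ((2-E^2)/2)))
        + ∑ j, ((2-E^2)/4 * (r j)^2 + E^2/2 * (r j) - Real.log (r j))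
        - W * ((2-E^2)/4 + E^2/2) := by
    rw [Complex.sub_re, h2, h3, hka]
    congr 2
    · congr 1
      exact Finset.sum_congr rfl fun j _ => Finset.sum_congr rfl fun l _ => hqt j l
    · exact Finset.sum_congr rfl fun j _ => hkb j
  -- sum identities
  have hcol : ∀ l, ∑ j, S j l = 0 := by
    intro l
    have : ∀ j, S j l = S l j := fun j => hsym.apply l j
    simp only [this]
    exact hrow l
  have hrowf : ∀ f : Fin W → ℝ, ∑ j, ∑ l, S j l * f j = 0 := by
    intro f
    refine Finset.sum_eq_zero fun j _ => ?_
    rw [← Finset.sum_mul, hrow j, zero_mul]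
  have hcolf : ∀ f : Fin W → ℝ, ∑ j, ∑ l, S j l * f l = 0 := by
    intro f
    rw [Finset.sum_comm]
    refine Finset.sum_eq_zero fun l _ => ?_
    rw [← Finset.sum_mul, hcol l, zero_mul]
  have hq : ∑ j, ∑ l, S j l * (r j - r l)^2 = -2 * ∑ j, ∑ l, S j l * (x j * x l) := by
    have expand : ∑ j, ∑ l, S j l * (r j - r l)^2
        = (∑ j, ∑ l, S j l * ((r j)^2 - 2*(r j) + 2))
          + ((∑ j, ∑ l, S j l * ((r l)^2 - 2*(r l)))
          + (-2) * ∑ j, ∑ l, S j l * (x j * x l)) := by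
      rw [Finset.mul_sum, ← Finset.sum_add_distrib, ← Finset.sum_add_distrib]
      refine Finset.sum_congr rfl fun j _ => ?_
      rw [Finset.mul_sum, ← Finset.sum_add_distrib, ← Finset.sum_add_distrib]
      refine Finset.sum_congr rfl fun l _ => ?_
      rw [hxj, hxj]; ring
    rw [expand, hrowf (fun j => (r j)^2 - 2*(r j) + 2), hcolf (fun l => (r l)^2 - 2*(r l))]
    ring
  have hdot : dotProduct x ((1+S).mulVec x)
      = ∑ j, x j ^2 + ∑ j, ∑ l, S j l * (x j * x l) := by
    rw [Matrix.add_mulVec, Matrix.one_mulVec, dotProduct_add]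
    congr 1
    · simp [dotProduct, pow_two]
    · rw [dotProduct]
      refine Finset.sum_congr rfl fun j _ => ?_
      rw [Matrix.mulVec, dotProduct, Finset.mul_sum]
      exact Finset.sum_congr rfl fun l _ => by ring
  -- key identity
  have key : (L - (W:ℂ) * k a).re
      = (2-E^2)/4 * dotProduct x ((1+S).mulVec x)
        + ∑ j, (r j - Real.log (r j) - 1) := by
    rw [hre, hdot]
    have e1 : ∑ j, ∑ l, S j l * ((r j - r l)^2 * ((2-E^2)/2))
        = (2-E^2)/2 * ∑ j, ∑ l, S j l * (r j - r l)^2 := by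
      rw [Finset.mul_sum]
      refine Finset.sum_congr rfl fun j _ => ?_
      rw [Finset.mul_sum]
      exact Finset.sum_congr rfl fun l _ => by ring
    rw [e1, hq]
    have e2 : (∑ j, ((2-E^2)/4 * (r j)^2 + E^2/2 * (r j) - Real.log (r j)))
        - (W:ℝ) * ((2-E^2)/4 + E^2/2)
        = (2-E^2)/4 * ∑ j, x j^2 + ∑ j, (r j - Real.log (r j) - 1) := by
      have hW' : (W:ℝ) * ((2-E^2)/4 + E^2/2) = ∑ _j : Fin W, ((2-E^2)/4 + E^2/2) := by
        rw [Finset.sum_const, Finset.card_fin, nsmul_eq_mul]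
      rw [hW', ← Finset.sum_sub_distrib, Finset.mul_sum, ← Finset.sum_add_distrib]
      refine Finset.sum_congr rfl fun j _ => ?_
      rw [hxj]; ring
    linarith [e2]
  -- nonnegativity pieces
  have hxsum : ∑ j, (r j - 1)^2 = ∑ j, x j ^ 2 :=
    Finset.sum_congr rfl fun j _ => by rw [hxj]
  have hBnn : 0 ≤ ∑ j, (r j - Real.log (r j) - 1) := by
    refine Finset.sum_nonneg fun j _ => ?_
    have := Real.log_le_sub_one_of_pos (hr j)
    linarith
  have hdotnn : 0 ≤ dotProduct x ((1+S).mulVec x) := by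
    refine le_trans ?_ (hspec x)
    have : 0 ≤ ∑ i, x i ^ 2 := Finset.sum_nonneg fun i _ => sq_nonneg _
    positivity
  have main1 : c₀ * (2 - E ^ 2) / 4 * ∑ j, (r j - 1) ^ 2 + ∑ j, (r j - Real.log (r j) - 1)
      ≤ (L - (W : ℂ) * k a).re := by
    rw [key, hxsum]
    have h := hspec x
    nlinarith [h, h2E]
  have hAnn : 0 ≤ c₀ * (2 - E ^ 2) / 4 * ∑ j, (r j - 1) ^ 2 := by
    have : 0 ≤ ∑ j, (r j - 1) ^ 2 := Finset.sum_nonneg fun j _ => sq_nonneg _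
    positivity
  refine ⟨main1, by linarith, ?_, ?_⟩
  · -- re = 0 → all r j = 1
    intro h0
    have hA : 0 ≤ (2-E^2)/4 * dotProduct x ((1+S).mulVec x) := by positivity
    have hB0 : ∑ j, (r j - Real.log (r j) - 1) = 0 := by
      rw [key] at h0; linarith
    intro j
    by_contra hne
    have hlt := Real.log_lt_sub_one_of_pos (hr j) hne
    have hpos : ∀ i ∈ Finset.univ, (0:ℝ) ≤ r i - Real.log (r i) - 1 := by
      intro i _
      have := Real.log_le_sub_one_of_pos (hr i)
      linarith
    have := (Finset.sum_eq_zero_iff_of_nonneg hpos).mp hB0 j (Finset.mem_univ j)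
    linarith
  · -- all r j = 1 → re = 0
    intro h1
    rw [key]
    have hx0 : x = 0 := by
      funext j; simp [hxj j, h1 j]
    rw [hx0]
    simp [dotProduct, h1]
end
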